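/- Let S = {s_1, ..., s_K} ⊂ ℝ be a finite context space with probability weights d(s_i) > 0, and let α_i = d(s_i)(r(s_i,1) − r(s_i,0)) for a bounded reward function r. Consider policies π_θ(s,1) = e^{θ_0+θ_1 s}/(1+e^{θ_0+θ_1 s}) with θ = (θ_0,θ_1) ∈ ℝ^2 and average reward V(θ) = Σ_i d(s_i)[r(s_i,1)π_θ(s_i,1) + r(s_i,0)(1−π_θ(s_i,1))]. Then sup_θ V(θ) equals the maximum of the linear functional (p_1,...,p_K) ↦ Σ_i α_i p_i + Σ_i d(s_i) r(s_i,0) over the set of 0-1 vectors (ν_1,...,ν_K) ∈ {0,1}^K whose entries are monotone (nondecreasing or nonincreasing). In particular, there is a sequence of policies converging to a deterministic policy achieving the supremum. -/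

import Mathlib

open Finset

open Filter Topology

noncomputable def logistic (x : ℝ) : ℝ := Real.exp x / (1 + Real.exp x)

lemma one_add_exp_pos (x : ℝ) : 0 < 1 + Real.exp x := by positivity

lemma logistic_nonneg (x : ℝ) : 0 ≤ logistic x :=
  div_nonneg (Real.exp_nonneg x) (one_add_exp_pos x).le

lemma logistic_le_one (x : ℝ) : logistic x ≤ 1 := by
  rw [logistic, div_le_one (one_add_exp_pos x)]; linarith

lemma logistic_mono : Monotone logistic := by
  intro x y hxy
  rw [logistic, logistic, div_le_div_iff₀ (one_add_exp_pos x) (one_add_exp_pos y)]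
  have h := Real.exp_le_exp.2 hxy
  nlinarith [Real.exp_pos x, Real.exp_pos y]

lemma logistic_eq (x : ℝ) : logistic x = 1 - (1 + Real.exp x)⁻¹ := by
  rw [logistic]
  have h := (one_add_exp_pos x).ne'
  field_simp
  ring

lemma tendsto_logistic_atTop : Tendsto logistic atTop (𝓝 1) := by
  have h : Tendsto (fun x : ℝ => (1 + Real.exp x)⁻¹) atTop (𝓝 0) :=
    (tendsto_atTop_add_const_left _ 1 Real.tendsto_exp_atTop).inv_tendsto_atTop
  have h2 : Tendsto (fun x : ℝ => 1 - (1 + Real.exp x)⁻¹) atTop (𝓝 (1 - 0)) :=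
    tendsto_const_nhds.sub h
  rw [show logistic = fun x => 1 - (1 + Real.exp x)⁻¹ from funext logistic_eq]
  simpa using h2

lemma tendsto_logistic_atBot : Tendsto logistic atBot (𝓝 0) := by
  have h : Tendsto (fun x : ℝ => Real.exp x / (1 + Real.exp x)) atBot (𝓝 (0 / (1 + 0))) :=
    Real.tendsto_exp_atBot.div (tendsto_const_nhds.add Real.tendsto_exp_atBot) (by norm_num)
  show Tendsto (fun x : ℝ => Real.exp x / (1 + Real.exp x)) atBot (𝓝 0)
  simpa using h

lemma abel_nat (K : ℕ) (α p : ℕ → ℝ) (hp : Monotone p) (h0 : ∀ i, 0 ≤ p i)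
    (h1 : ∀ i, p i ≤ 1) :
    ∃ k, ∑ i ∈ Finset.range K, α i * p i ≤
      ∑ i ∈ Finset.range K, α i * (if k ≤ i then 1 else 0) := by
  set q : ℕ → ℝ := fun j => if j = 0 then 0 else p (j - 1) with hq
  set g : ℕ → ℝ := fun j => ∑ i ∈ Finset.range K, (if j ≤ i then α i else 0) with hg
  have hqmono : Monotone q := by
    intro a b hab
    rcases Nat.eq_zero_or_pos a with ha | ha
    · rcases Nat.eq_zero_or_pos b with hb | hb
      · simp [hq, ha, hb]
      · simp only [hq, ha, if_pos rfl, if_neg hb.ne']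
        exact h0 _
    · simp only [hq, if_neg ha.ne', if_neg (Nat.lt_of_lt_of_le ha hab).ne']
      exact hp (by omega)
  -- Abel identity
  have habel : ∑ i ∈ Finset.range K, α i * p i
      = ∑ j ∈ Finset.range K, (q (j + 1) - q j) * g j := by
    have hstep : ∀ i ∈ Finset.range K, α i * p i
        = ∑ j ∈ Finset.range K, (if j ≤ i then α i * (q (j+1) - q j) else 0) := by
      intro i hi
      rw [Finset.mem_range] at hi
      have hfilter : (Finset.range K).filter (fun j => j ≤ i) = Finset.range (i + 1) := by
        ext j; simp only [Finset.mem_filter, Finset.mem_range]; omega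
      rw [← Finset.sum_filter, hfilter, ← Finset.mul_sum, Finset.sum_range_sub]
      have : q (i + 1) - q 0 = p i := by simp [hq]
      rw [this]
    rw [Finset.sum_congr rfl hstep, Finset.sum_comm]
    refine Finset.sum_congr rfl fun j _ => ?_
    rw [hg, Finset.mul_sum]
    refine Finset.sum_congr rfl fun i _ => ?_
    split_ifs <;> ring
  -- pick max of g over range (K+1)
  obtain ⟨k, hk, hkmax⟩ := Finset.exists_max_image (Finset.range (K + 1)) g ⟨0, by simp⟩
  have hgK : g K = 0 := by
    rw [hg]
    refine Finset.sum_eq_zero fun i hi => ?_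
    rw [Finset.mem_range] at hi
    rw [if_neg (by omega)]
  have hgk0 : 0 ≤ g k := by
    rw [← hgK]; exact hkmax K (by simp)
  refine ⟨k, ?_⟩
  have hb1 : ∑ j ∈ Finset.range K, (q (j + 1) - q j) * g j
      ≤ ∑ j ∈ Finset.range K, (q (j + 1) - q j) * g k := by
    refine Finset.sum_le_sum fun j hj => ?_
    rw [Finset.mem_range] at hj
    exact mul_le_mul_of_nonneg_left (hkmax j (by simp; omega))
      (sub_nonneg.2 (hqmono (Nat.le_succ j)))
  have hb2 : ∑ j ∈ Finset.range K, (q (j + 1) - q j) * g k = q K * g k := by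
    rw [← Finset.sum_mul, Finset.sum_range_sub]
    simp [hq]
  have hqK1 : q K ≤ 1 := by
    rcases Nat.eq_zero_or_pos K with h | h
    · simp [hq, h]
    · simp only [hq, if_neg h.ne']; exact h1 _
  have hb3 : q K * g k ≤ g k := by
    nlinarith
  have hgkval : g k = ∑ i ∈ Finset.range K, α i * (if k ≤ i then 1 else 0) := by
    rw [hg]
    refine Finset.sum_congr rfl fun i _ => ?_
    split_ifs <;> ring
  linarith [habel, hb1, hb2, hb3, hgkval.symm.le]

lemma fin_mono {K : ℕ} (α p : Fin K → ℝ) (hp : Monotone p)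
    (h0 : ∀ i, 0 ≤ p i) (h1 : ∀ i, p i ≤ 1) :
    ∃ ν : Fin K → ℝ, (∀ i, ν i = 0 ∨ ν i = 1) ∧ Monotone ν ∧
      ∑ i, α i * p i ≤ ∑ i, α i * ν i := by
  rcases Nat.eq_zero_or_pos K with hK | hK
  · subst hK
    exact ⟨fun _ => 0, fun i => i.elim0, monotone_const, by simp⟩
  set P : ℕ → ℝ := fun n => p ⟨min n (K - 1), by omega⟩ with hP
  set A : ℕ → ℝ := fun n => if h : n < K then α ⟨n, h⟩ else 0 with hA
  have hPmono : Monotone P := by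
    intro a b hab
    exact hp (by simp [Fin.mk_le_mk]; omega)
  obtain ⟨k, hk⟩ := abel_nat K A P hPmono (fun i => h0 _) (fun i => h1 _)
  refine ⟨fun i => if k ≤ (i : ℕ) then 1 else 0, fun i => by dsimp; split_ifs <;> simp,
    ?_, ?_⟩
  · intro i j hij
    dsimp
    have h : (i : ℕ) ≤ (j : ℕ) := hij
    split_ifs with ha hb
    · exact le_rfl
    · exact absurd (ha.trans h) hb
    · norm_num
    · exact le_rfl
  · have e1 : ∑ i, α i * p i = ∑ n ∈ Finset.range K, A n * P n := by
      rw [← Fin.sum_univ_eq_sum_range (fun n => A n * P n)]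
      refine Finset.sum_congr rfl fun i _ => ?_
      have h1' : A (i : ℕ) = α i := by
        simp [hA, i.isLt]
      have h2' : P (i : ℕ) = p i := by
        have hi : min (i : ℕ) (K - 1) = (i : ℕ) := by have := i.isLt; omega
        rw [hP]
        exact congrArg p (Fin.ext hi)
      rw [h1', h2']
    have e2 : ∑ i : Fin K, α i * (if k ≤ (i : ℕ) then 1 else 0)
        = ∑ n ∈ Finset.range K, A n * (if k ≤ n then 1 else 0) := by
      rw [← Fin.sum_univ_eq_sum_range (fun n => A n * (if k ≤ n then 1 else 0))]
      refine Finset.sum_congr rfl fun i _ => ?_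
      have h1' : A (i : ℕ) = α i := by simp [hA, i.isLt]
      rw [h1']
    rw [e1, e2]
    exact hk

lemma fin_anti {K : ℕ} (α p : Fin K → ℝ) (hp : Antitone p)
    (h0 : ∀ i, 0 ≤ p i) (h1 : ∀ i, p i ≤ 1) :
    ∃ ν : Fin K → ℝ, (∀ i, ν i = 0 ∨ ν i = 1) ∧ Antitone ν ∧
      ∑ i, α i * p i ≤ ∑ i, α i * ν i := by
  have hrev : Monotone (fun i : Fin K => p i.rev) := by
    intro a b hab
    exact hp (Fin.rev_le_rev.mpr hab)
  obtain ⟨ν, h01, hmono, hle⟩ :=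
    fin_mono (fun i : Fin K => α i.rev) (fun i => p i.rev) hrev (fun i => h0 _) (fun i => h1 _)
  refine ⟨fun i => ν i.rev, fun i => h01 _, ?_, ?_⟩
  · intro a b hab
    exact hmono (Fin.rev_le_rev.mpr hab)
  · have e1 : ∑ i : Fin K, α i * p i = ∑ i : Fin K, α i.rev * p i.rev :=
      (Equiv.sum_comp Fin.revPerm (fun i => α i * p i)).symm
    have e2 : ∑ i : Fin K, α i * ν i.rev = ∑ i : Fin K, α i.rev * ν i := by
      rw [← Equiv.sum_comp Fin.revPerm (fun i => α i * ν i.rev)]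
      refine Finset.sum_congr rfl fun i _ => ?_
      simp [Fin.revPerm]
    rw [e1, e2]
    exact hle

lemma tend_pos {x : ℝ} (hx : 0 < x) :
    Tendsto (fun n : ℕ => logistic ((n : ℝ) * x)) atTop (𝓝 1) :=
  tendsto_logistic_atTop.comp (tendsto_natCast_atTop_atTop.atTop_mul_const hx)

lemma tend_neg {x : ℝ} (hx : x < 0) :
    Tendsto (fun n : ℕ => logistic ((n : ℝ) * x)) atTop (𝓝 0) :=
  tendsto_logistic_atBot.comp (tendsto_natCast_atTop_atTop.atTop_mul_const_of_neg hx)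

lemma attain_mono {K : ℕ} (s : Fin K → ℝ) (hs : StrictMono s) (ν : Fin K → ℝ)
    (h01 : ∀ i, ν i = 0 ∨ ν i = 1) (hmono : Monotone ν) :
    ∃ θ : ℕ → ℝ × ℝ, ∀ i, Tendsto (fun n => logistic ((θ n).1 + (θ n).2 * s i))
      atTop (𝓝 (ν i)) := by
  by_cases hz : ∀ i, ν i = 0
  · refine ⟨fun n => (-(n : ℝ), 0), fun i => ?_⟩
    have h : Tendsto (fun n : ℕ => logistic ((n : ℝ) * (-1))) atTop (𝓝 0) :=
      tend_neg (by norm_num)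
    rw [hz i]
    exact h.congr (fun n => by ring_nf)
  · push_neg at hz
    obtain ⟨i0, hi0⟩ := hz
    have hi0' : ν i0 = 1 := (h01 i0).resolve_left hi0
    set T : Finset (Fin K) := Finset.univ.filter (fun i => ν i = 1) with hT
    have hTne : T.Nonempty := ⟨i0, by simp [hT, hi0']⟩
    set k : Fin K := T.min' hTne with hk
    have hνk : ν k = 1 := by
      have := T.min'_mem hTne
      simp [hT] at this
      exact this
    have hiff : ∀ i, ν i = 1 ↔ k ≤ i := by
      intro i
      constructor
      · intro h
        exact T.min'_le i (by simp [hT, h])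
      · intro h
        have h1 := hmono h
        rcases h01 i with h' | h'
        · rw [hνk] at h1; rw [h'] at h1; linarith
        · exact h'
    -- choose threshold c
    obtain ⟨c, hc1, hc2⟩ : ∃ c : ℝ, (∀ i, k ≤ i → c < s i) ∧ (∀ i, i < k → s i < c) := by
      rcases Nat.eq_zero_or_pos (k : ℕ) with h0' | h0'
      · refine ⟨s k - 1, fun i hki => ?_, fun i hik => ?_⟩
        · have := hs.monotone hki; linarith
        · exact absurd hik (by omega)
      · have hklt : (k : ℕ) - 1 < K := by have := k.isLt; omega
        set j : Fin K := ⟨(k : ℕ) - 1, hklt⟩ with hj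
        have hjk : j < k := by simp [hj, Fin.lt_def]; omega
        refine ⟨(s j + s k) / 2, fun i hki => ?_, fun i hik => ?_⟩
        · have h1 : s j < s k := hs hjk
          have h2 : s k ≤ s i := hs.monotone hki
          linarith
        · have h1 : s i ≤ s j := hs.monotone (by simp [hj, Fin.le_def]; omega)
          have h2 : s j < s k := hs hjk
          linarith
    refine ⟨fun n => (-((n : ℝ) * c), (n : ℝ)), fun i => ?_⟩
    by_cases hki : k ≤ i
    · rw [(hiff i).mpr hki]
      have h : Tendsto (fun n : ℕ => logistic ((n : ℝ) * (s i - c))) atTop (𝓝 1) :=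
        tend_pos (by have := hc1 i hki; linarith)
      exact h.congr (fun n => by ring_nf)
    · have hνi : ν i = 0 := by
        rcases h01 i with h' | h'
        · exact h'
        · exact absurd ((hiff i).mp h') hki
      rw [hνi]
      have h : Tendsto (fun n : ℕ => logistic ((n : ℝ) * (s i - c))) atTop (𝓝 0) :=
        tend_neg (by have := hc2 i (lt_of_not_ge hki); linarith)
      exact h.congr (fun n => by ring_nf)

lemma attain {K : ℕ} (s : Fin K → ℝ) (hs : StrictMono s) (ν : Fin K → ℝ)
    (h01 : ∀ i, ν i = 0 ∨ ν i = 1) (hmono : Monotone ν ∨ Antitone ν) :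
    ∃ θ : ℕ → ℝ × ℝ, ∀ i, Tendsto (fun n => logistic ((θ n).1 + (θ n).2 * s i))
      atTop (𝓝 (ν i)) := by
  rcases hmono with hm | ha
  · exact attain_mono s hs ν h01 hm
  · have hs' : StrictMono (fun i : Fin K => -(s i.rev)) := by
      intro a b hab
      simp only [neg_lt_neg_iff]
      exact hs (Fin.rev_lt_rev.mpr hab)
    have hν' : Monotone (fun i : Fin K => ν i.rev) := fun a b hab =>
      ha (Fin.rev_le_rev.mpr hab)
    obtain ⟨θ, hθ⟩ := attain_mono _ hs' _ (fun i => h01 _) hν'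
    refine ⟨fun n => ((θ n).1, -(θ n).2), fun i => ?_⟩
    have h := hθ i.rev
    simp only [Fin.rev_rev] at h
    exact h.congr (fun n => by ring_nf)

/-- Maximizing the average reward of a two-parameter logistic policy class over a
finite context space equals maximizing the corresponding linear functional over
monotone 0-1 vectors; in particular the supremum is attained in the limit by a
deterministic policy. -/
theorem sup_average_reward_eq_max_over_monotone_01
    {K : ℕ} (hK : 0 < K) (s : Fin K → ℝ) (hs : StrictMono s) (hspos : ∀ i, 0 < s i)
    (d : Fin K → ℝ) (hd : ∀ i, 0 < d i) (hdsum : ∑ i, d i = 1)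
    (r1 r0 : Fin K → ℝ)
    (α : Fin K → ℝ) (hα : ∀ i, α i = d i * (r1 i - r0 i))
    (V : ℝ × ℝ → ℝ)
    (hV : ∀ θ : ℝ × ℝ, V θ = ∑ i, d i * (r1 i * logistic (θ.1 + θ.2 * s i) +
      r0 i * (1 - logistic (θ.1 + θ.2 * s i))))
    (M : Set (Fin K → ℝ))
    (hM : M = {ν | (∀ i, ν i = 0 ∨ ν i = 1) ∧ (Monotone ν ∨ Antitone ν)}) :
    sSup (Set.range V) =
      sSup ((fun ν : Fin K → ℝ => (∑ i, α i * ν i) + ∑ i, d i * r0 i) '' M) ∧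
    ∃ ν ∈ M, (∑ i, α i * ν i) + (∑ i, d i * r0 i) = sSup (Set.range V) := by
  set C : ℝ := ∑ i, d i * r0 i with hC
  set f : (Fin K → ℝ) → ℝ := fun ν => (∑ i, α i * ν i) + C with hf
  -- rewrite V
  have hVeq : ∀ θ : ℝ × ℝ, V θ = (∑ i, α i * logistic (θ.1 + θ.2 * s i)) + C := by
    intro θ
    rw [hV θ, hC, ← Finset.sum_add_distrib]
    refine Finset.sum_congr rfl fun i _ => ?_
    rw [hα i]
    ring
  -- M is finite and nonempty
  have hMfin : M.Finite := by
    have hsub : M ⊆ Set.pi Set.univ (fun _ : Fin K => ({0, 1} : Set ℝ)) := by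
      intro ν hν
      rw [hM] at hν
      intro i _
      rcases hν.1 i with h | h <;> simp [h]
    exact Set.Finite.subset (Set.Finite.pi fun _ => (Set.finite_singleton 1).insert 0) hsub
  have hMne : M.Nonempty := by
    refine ⟨fun _ => 0, ?_⟩
    rw [hM]
    exact ⟨fun i => Or.inl rfl, Or.inl monotone_const⟩
  -- the max over M is attained
  have hBmem : sSup (f '' M) ∈ f '' M :=
    (hMne.image f).csSup_mem (hMfin.image f)
  set B : ℝ := sSup (f '' M) with hB
  obtain ⟨ν', hν'M, hν'f⟩ := hBmem
  have hbdd : BddAbove (f '' M) := (hMfin.image f).bddAbove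
  -- upper bound : ∀ θ, V θ ≤ B
  have hub : ∀ θ : ℝ × ℝ, V θ ≤ B := by
    intro θ
    set p : Fin K → ℝ := fun i => logistic (θ.1 + θ.2 * s i) with hp
    have hp0 : ∀ i, 0 ≤ p i := fun i => logistic_nonneg _
    have hp1 : ∀ i, p i ≤ 1 := fun i => logistic_le_one _
    have hex : ∃ ν : Fin K → ℝ, (∀ i, ν i = 0 ∨ ν i = 1) ∧ (Monotone ν ∨ Antitone ν) ∧
        ∑ i, α i * p i ≤ ∑ i, α i * ν i := by
      rcases le_total 0 θ.2 with h2 | h2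
      · have hpm : Monotone p := fun a b hab =>
          logistic_mono (by nlinarith [hs.monotone hab])
        obtain ⟨ν, ha, hb, hc⟩ := fin_mono α p hpm hp0 hp1
        exact ⟨ν, ha, Or.inl hb, hc⟩
      · have hpa : Antitone p := fun a b hab =>
          logistic_mono (by nlinarith [hs.monotone hab])
        obtain ⟨ν, ha, hb, hc⟩ := fin_anti α p hpa hp0 hp1
        exact ⟨ν, ha, Or.inr hb, hc⟩
    obtain ⟨ν, ha, hb, hc⟩ := hex
    have hνM : ν ∈ M := by rw [hM]; exact ⟨ha, hb⟩
    have : f ν ≤ B := le_csSup hbdd ⟨ν, hνM, rfl⟩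
    rw [hVeq θ]
    have : (∑ i, α i * p i) + C ≤ f ν := by rw [hf]; dsimp; linarith
    linarith [le_csSup hbdd (Set.mem_image_of_mem f hνM)]
  have hrangene : (Set.range V).Nonempty := ⟨V (0, 0), ⟨(0, 0), rfl⟩⟩
  have hrangebdd : BddAbove (Set.range V) := by
    refine ⟨B, ?_⟩
    rintro x ⟨θ, rfl⟩
    exact hub θ
  -- lower bound via limit
  have hν'M' : (∀ i, ν' i = 0 ∨ ν' i = 1) ∧ (Monotone ν' ∨ Antitone ν') := by
    rw [hM] at hν'M; exact hν'M
  obtain ⟨θseq, hθseq⟩ := attain s hs ν' hν'M'.1 hν'M'.2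
  have hVtend : Tendsto (fun n => V (θseq n)) atTop (𝓝 (f ν')) := by
    have h1 : Tendsto (fun n => ∑ i, α i * logistic ((θseq n).1 + (θseq n).2 * s i))
        atTop (𝓝 (∑ i, α i * ν' i)) :=
      tendsto_finset_sum _ fun i _ => (hθseq i).const_mul (α i)
    have h2 := h1.add_const C
    refine h2.congr fun n => ?_
    rw [hVeq (θseq n)]
  have hBle : B ≤ sSup (Set.range V) := by
    rw [← hν'f]
    exact le_of_tendsto hVtend (Filter.Eventually.of_forall fun n =>
      le_csSup hrangebdd (Set.mem_range_self _))
  have hle : sSup (Set.range V) ≤ B := csSup_le hrangene (by rintro x ⟨θ, rfl⟩; exact hub θ)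
  have heq : sSup (Set.range V) = B := le_antisymm hle hBle
  refine ⟨heq, ⟨ν', hν'M, ?_⟩⟩
  rw [heq, ← hν'f]
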